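/- Let (X, Π) be a weighted pure d-dimensional simplicial complex, let 0 ≤ j ≤ d−1, and let f ∈ ℝ^{X(j)}. For α ∈ X(j−1), let f_α ∈ ℝ^{X_α(0)} be defined by f_α(x) = f(α ∪ {x}), and let J_α f_α denote the constant vector on X_α(0) with value E_{x ∼ Π^α_0}[f_α(x)]. Then the following three identities hold (Garland decomposition): (1) ⟨f, f⟩_{Π_j} = E_{α ∼ Π_{j−1}} [⟨f_α, f_α⟩_{Π^α_0}]; (2) ⟨f, P∨_j f⟩_{Π_j} = E_{α ∼ Π_{j−1}} [⟨f_α, J_α f_α⟩_{Π^α_0}]; (3) ⟨f, N_j f⟩_{Π_j} = E_{α ∼ Π_{j−1}} [⟨f_α, M_α f_α⟩_{Π^α_0}]. -/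

import Mathlib

open Finset

/-- A weighted pure `d`-dimensional simplicial complex on a finite ground set `V`.
Faces are finsets; a face of cardinality `m` has dimension `m - 1` (so `X(j)` is the
set of faces of cardinality `j + 1`).  The family of faces is downward closed, every
face is contained in a face of cardinality `d + 1` (purity), and a probability
distribution `Π = Π_d` (positive weights summing to `1`) is given on the
top-dimensional faces. -/
structure WSC (V : Type*) [DecidableEq V] [Fintype V] (d : ℕ) where
  faces : Finset (Finset V)
  empty_mem : ∅ ∈ faces
  down_closed : ∀ β ∈ faces, ∀ α ⊆ β, α ∈ faces
  pure : ∀ α ∈ faces, ∃ β ∈ faces, α ⊆ β ∧ β.card = d + 1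
  dim_le : ∀ α ∈ faces, α.card ≤ d + 1
  weight : Finset V → ℝ
  weight_pos : ∀ β ∈ faces, β.card = d + 1 → 0 < weight β
  weight_zero : ∀ β : Finset V, β ∉ faces ∨ β.card ≠ d + 1 → weight β = 0
  weight_sum : ∑ β ∈ faces.filter (fun β => β.card = d + 1), weight β = 1

namespace WSC

variable {V : Type*} [DecidableEq V] [Fintype V] {d : ℕ}

/-- Auxiliary recursion for the marginal distributions: `Waux X t` is the marginal
distribution `Π_{d - t}` on faces of cardinality `d + 1 - t`, defined by
`Π_j(α) = (1/(j+2)) ∑_{β ∈ X(j+1), β ⊇ α} Π_{j+1}(β)`. -/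
noncomputable def Waux (X : WSC V d) : ℕ → Finset V → ℝ
  | 0 => X.weight
  | (t + 1) => fun α =>
      (1 / ((d + 1 - t : ℕ) : ℝ)) *
        ∑ β ∈ X.faces.filter (fun β => α ⊆ β ∧ β.card = d + 1 - t), X.Waux t β

/-- `X.W m α` is the marginal probability `Π_{m-1}(α)` of the face `α` of cardinality
`m` (dimension `m - 1`). -/
noncomputable def W (X : WSC V d) (m : ℕ) : Finset V → ℝ := X.Waux (d + 1 - m)

/-- The inner product `⟨f, g⟩_{Π_{m-1}}` on `ℝ^{X(m-1)}` (faces of cardinality `m`). -/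
noncomputable def inn (X : WSC V d) (m : ℕ) (f g : Finset V → ℝ) : ℝ :=
  ∑ α ∈ X.faces.filter (fun α => α.card = m), X.W m α * f α * g α

/-- The up operator `U_j`: `(U_j f)(β) = (1/(j+2)) ∑_{x ∈ β} f(β \ {x})`, for `β` of
cardinality `j + 2`.  (The formula is uniform in the cardinality of `β`.) -/
noncomputable def upOp (f : Finset V → ℝ) : Finset V → ℝ :=
  fun β => (1 / (β.card : ℝ)) * ∑ x ∈ β, f (β.erase x)

/-- The down operator `D_{j+1}`:
`(D_{j+1} g)(α) = ∑_{β ∈ X(j+1), β ⊇ α} Π_{j+1}(β) g(β) / ((j+2) Π_j(α))`, for `α` of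
cardinality `j + 1`.  (The formula is uniform in the cardinality of `α`.) -/
noncomputable def downOp (X : WSC V d) (g : Finset V → ℝ) : Finset V → ℝ :=
  fun α => ∑ β ∈ X.faces.filter (fun β => α ⊆ β ∧ β.card = α.card + 1),
      (X.W (α.card + 1) β * g β) / (((α.card : ℝ) + 1) * X.W α.card α)

/-- The down-up walk `P∨_k = U_{k-1} D_k`, acting on functions on `X(k)` (faces of
cardinality `k + 1`). -/
noncomputable def downUp (X : WSC V d) (f : Finset V → ℝ) : Finset V → ℝ :=
  upOp (X.downOp f)

/-- The up-down walk `P∧_k = D_{k+1} U_k`, acting on functions on `X(k)` (faces of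
cardinality `k + 1`). -/
noncomputable def upDown (X : WSC V d) (f : Finset V → ℝ) : Finset V → ℝ :=
  X.downOp (upOp f)

/-- The `k`-th non-lazy up-down walk `N_k = ((k+2)/(k+1)) (P∧_k - (1/(k+2)) I)`. -/
noncomputable def nonLazy (X : WSC V d) (k : ℕ) (f : Finset V → ℝ) : Finset V → ℝ :=
  fun α => (((k : ℝ) + 2) / ((k : ℝ) + 1)) * (X.upDown f α - (1 / ((k : ℝ) + 2)) * f α)

/-- The up-down walk `U_{a,b} = D_{a+1} ⋯ D_b · U_{b-1} ⋯ U_a` on `X(a)` through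
`X(b)`, where `t = b - a`. -/
noncomputable def upDownAB (X : WSC V d) (t : ℕ) (f : Finset V → ℝ) : Finset V → ℝ :=
  (X.downOp)^[t] (upOp^[t] f)

/-- The second largest eigenvalue of a row-stochastic operator `M` on `ℝ^{X(m-1)}`
(faces of cardinality `m`) which is self-adjoint with respect to `⟨·,·⟩_{Π_{m-1}}`
and has stationary distribution `Π_{m-1}`: by the variational principle it is the
supremum of the Rayleigh quotients of (nonzero) functions orthogonal to the
constant function `1`. -/
noncomputable def lam2 (X : WSC V d) (m : ℕ) (M : (Finset V → ℝ) → Finset V → ℝ) : ℝ :=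
  sSup { r : ℝ | ∃ f : Finset V → ℝ,
    X.inn m f (fun _ => 1) = 0 ∧ X.inn m f f ≠ 0 ∧
    r = X.inn m f (M f) / X.inn m f f }

/-- The vertices of the link `X_α`: those `x ∉ α` with `α ∪ {x} ∈ X`. -/
def linkVerts (X : WSC V d) (α : Finset V) : Finset V :=
  Finset.univ.filter (fun x => x ∉ α ∧ insert x α ∈ X.faces)

/-- The link distribution `Π^α_l(τ) = Π_{j+1+l}(α ∪ τ) / (C(|α ∪ τ|, |α|) · Π_j(α))`
for a face `α` of dimension `j` and `τ ∈ X_α(l)`. -/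
noncomputable def linkPi (X : WSC V d) (α τ : Finset V) : ℝ :=
  X.W (α ∪ τ).card (α ∪ τ) / ((Nat.choose (α ∪ τ).card α.card : ℝ) * X.W α.card α)

/-- The random walk matrix `M_α` of the graph of the link `X_α`, with entries
`M_α(x, y) = Π^α_1({x, y}) / (2 Π^α_0(x))` for `{x, y} ∈ X_α(1)` and `0` otherwise,
viewed as an operator on functions on the vertices of the link. -/
noncomputable def linkWalk (X : WSC V d) (α : Finset V) (f : V → ℝ) : V → ℝ :=
  fun x => ∑ y ∈ (X.linkVerts α).filter
      (fun y => y ≠ x ∧ insert y (insert x α) ∈ X.faces),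
    (X.linkPi α {x, y} / (2 * X.linkPi α {x})) * f y

/-- The projector `J_α` onto the constant functions on the link: `J_α g` is the
constant function with value `E_{x ∼ Π^α_0}[g(x)]`. -/
noncomputable def linkJ (X : WSC V d) (α : Finset V) (g : V → ℝ) : V → ℝ :=
  fun _ => ∑ x ∈ X.linkVerts α, X.linkPi α {x} * g x

/-- The inner product `⟨g, h⟩_{Π^α_0}` on functions on the vertices of the link. -/
noncomputable def linkInner (X : WSC V d) (α : Finset V) (g h : V → ℝ) : ℝ :=
  ∑ x ∈ X.linkVerts α, X.linkPi α {x} * g x * h x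

/-- The second largest eigenvalue `λ₂(M_α)` of the random walk matrix of the graph
of the link `X_α`, via the variational principle. -/
noncomputable def linkLam2 (X : WSC V d) (α : Finset V) : ℝ :=
  sSup { r : ℝ | ∃ f : V → ℝ,
    X.linkInner α f (fun _ => 1) = 0 ∧ X.linkInner α f f ≠ 0 ∧
    r = X.linkInner α f (X.linkWalk α f) / X.linkInner α f f }

/-- `X.gammaC m` is `γ_{m-1} = max_{α ∈ X(m-1)} λ₂(M_α)`, the maximum over faces `α`
of cardinality `m` (dimension `m - 1`) of the second eigenvalue of the link walk. -/
noncomputable def gammaC (X : WSC V d) (m : ℕ) : ℝ :=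
  sSup { r : ℝ | ∃ α ∈ X.faces, α.card = m ∧ r = X.linkLam2 α }

end WSC

section Aux

variable {V : Type*} [DecidableEq V] [Fintype V] {d : ℕ}

lemma Waux_nonneg (X : WSC V d) : ∀ t β, 0 ≤ X.Waux t β := by
  intro t
  induction t with
  | zero =>
    intro β
    rcases em (β ∈ X.faces ∧ β.card = d + 1) with ⟨h1, h2⟩ | h
    · exact le_of_lt (X.weight_pos β h1 h2)
    · rw [show X.Waux 0 = X.weight from rfl, X.weight_zero β (by tauto)]
  | succ t ih =>
    intro β
    rw [show X.Waux (t+1) β = (1 / ((d + 1 - t : ℕ) : ℝ)) *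
        ∑ γ ∈ X.faces.filter (fun γ => β ⊆ γ ∧ γ.card = d + 1 - t), X.Waux t γ from rfl]
    apply mul_nonneg (by positivity)
    exact Finset.sum_nonneg fun γ _ => ih γ

lemma W_nonneg (X : WSC V d) (m : ℕ) (β : Finset V) : 0 ≤ X.W m β :=
  Waux_nonneg X _ β

lemma W_rec (X : WSC V d) {m : ℕ} (hm : m ≤ d) (α : Finset V) :
    X.W m α = (1 / ((m + 1 : ℕ) : ℝ)) *
      ∑ β ∈ X.faces.filter (fun β => α ⊆ β ∧ β.card = m + 1), X.W (m + 1) β := by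
  have h1 : d + 1 - m = (d - m) + 1 := by omega
  have h2 : d + 1 - (d - m) = m + 1 := by omega
  have h3 : d + 1 - (m + 1) = d - m := by omega
  show X.Waux (d + 1 - m) α = _
  rw [h1]
  show (1 / ((d + 1 - (d - m) : ℕ) : ℝ)) *
      ∑ β ∈ X.faces.filter (fun β => α ⊆ β ∧ β.card = d + 1 - (d - m)), X.Waux (d - m) β = _
  rw [h2]
  simp only [WSC.W, h3]

lemma W_pos (X : WSC V d) : ∀ m, m ≤ d + 1 → ∀ α ∈ X.faces, α.card = m → 0 < X.W m α := by
  suffices h : ∀ t, t ≤ d + 1 → ∀ α ∈ X.faces, α.card = d + 1 - t → 0 < X.W (d + 1 - t) α by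
    intro m hm α hα hcard
    have := h (d + 1 - m) (by omega) α hα (by omega)
    rwa [show d + 1 - (d + 1 - m) = m by omega] at this
  intro t
  induction t with
  | zero =>
    intro _ α hα hcard
    have : X.W (d + 1) α = X.weight α := by
      show X.Waux (d + 1 - (d + 1)) α = _
      rw [show d + 1 - (d + 1) = 0 by omega]
      rfl
    simp only [Nat.sub_zero] at hcard ⊢
    rw [this]
    exact X.weight_pos α hα hcard
  | succ t ih =>
    intro ht α hα hcard
    have hm : d + 1 - (t + 1) ≤ d := by omega
    rw [W_rec X hm α]
    have hm1 : d + 1 - (t + 1) + 1 = d + 1 - t := by omega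
    obtain ⟨σ, hσ, hασ, hσcard⟩ := X.pure α hα
    obtain ⟨β, hαβ, hβσ, hβcard⟩ := Finset.exists_subsuperset_card_eq hασ
      (le_trans (by omega) (le_refl (α.card + 1))) (by omega)
    have hβ : β ∈ X.faces := X.down_closed σ hσ β hβσ
    have hβpos : 0 < X.W (d + 1 - (t + 1) + 1) β := by
      rw [hm1]
      exact ih (by omega) β hβ (by omega)
    apply mul_pos (by positivity)
    apply Finset.sum_pos' (fun γ _ => W_nonneg X _ γ)
    exact ⟨β, Finset.mem_filter.2 ⟨hβ, hαβ, by omega⟩, hβpos⟩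

lemma W_pos' (X : WSC V d) {m : ℕ} (hm : m ≤ d + 1) {α : Finset V} (hα : α ∈ X.faces)
    (hcard : α.card = m) : 0 < X.W m α := W_pos X m hm α hα hcard

lemma sup_sum (X : WSC V d) {α : Finset V} (hα : α ∈ X.faces) {m : ℕ} (hm : α.card = m)
    (g : Finset V → ℝ) :
    ∑ β ∈ X.faces.filter (fun β => α ⊆ β ∧ β.card = m + 1), g β =
      ∑ x ∈ X.linkVerts α, g (insert x α) := by
  symm
  apply Finset.sum_bij (fun x _ => insert x α)
  · intro x hx
    simp only [WSC.linkVerts, Finset.mem_filter, Finset.mem_univ, true_and] at hx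
    exact Finset.mem_filter.2 ⟨hx.2, Finset.subset_insert x α,
      by rw [Finset.card_insert_of_notMem hx.1, hm]⟩
  · intro x hx y hy hxy
    simp only [WSC.linkVerts, Finset.mem_filter, Finset.mem_univ, true_and] at hx hy
    have : x ∈ insert y α := hxy ▸ Finset.mem_insert_self x α
    rcases Finset.mem_insert.1 this with h | h
    · exact h
    · exact absurd h hx.1
  · intro β hβ
    rw [Finset.mem_filter] at hβ
    obtain ⟨hβf, hαβ, hβcard⟩ := hβ
    have hsd : (β \ α).card = 1 := by
      rw [Finset.card_sdiff_of_subset hαβ]; omega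
    obtain ⟨x, hx⟩ := Finset.card_eq_one.1 hsd
    have hxβ : x ∈ β \ α := hx ▸ Finset.mem_singleton_self x
    rw [Finset.mem_sdiff] at hxβ
    refine ⟨x, ?_, ?_⟩
    · have hins : insert x α = β := by
        apply Finset.eq_of_subset_of_card_le
        · exact Finset.insert_subset hxβ.1 hαβ
        · rw [Finset.card_insert_of_notMem hxβ.2]; omega
      simp only [WSC.linkVerts, Finset.mem_filter, Finset.mem_univ, true_and]
      exact ⟨hxβ.2, hins ▸ hβf⟩
    · apply Finset.eq_of_subset_of_card_le
      · exact Finset.insert_subset hxβ.1 hαβ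
      · rw [Finset.card_insert_of_notMem hxβ.2]; omega
  · intro x _; rfl

lemma pair_sum (X : WSC V d) (m : ℕ) (F : Finset V → V → ℝ) :
    ∑ β ∈ X.faces.filter (fun β => β.card = m + 1), ∑ x ∈ β, F (β.erase x) x =
      ∑ α ∈ X.faces.filter (fun α => α.card = m), ∑ x ∈ X.linkVerts α, F α x := by
  rw [Finset.sum_sigma', Finset.sum_sigma']
  apply Finset.sum_nbij' (i := fun p => (⟨p.1.erase p.2, p.2⟩ : Σ _ : Finset V, V))
    (j := fun p => (⟨insert p.2 p.1, p.2⟩ : Σ _ : Finset V, V))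
  · rintro ⟨β, x⟩ hp
    simp only [Finset.mem_sigma, Finset.mem_filter] at hp ⊢
    obtain ⟨⟨hβf, hβc⟩, hx⟩ := hp
    refine ⟨⟨X.down_closed β hβf _ (Finset.erase_subset x β), ?_⟩, ?_⟩
    · rw [Finset.card_erase_of_mem hx]; omega
    · simp only [WSC.linkVerts, Finset.mem_filter, Finset.mem_univ, true_and]
      exact ⟨Finset.notMem_erase x β, by rwa [Finset.insert_erase hx]⟩
  · rintro ⟨α, x⟩ hp
    simp only [Finset.mem_sigma, Finset.mem_filter, WSC.linkVerts, Finset.mem_univ,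
      true_and] at hp ⊢
    obtain ⟨⟨hαf, hαc⟩, hxα, hins⟩ := hp
    exact ⟨⟨hins, by rw [Finset.card_insert_of_notMem hxα]; omega⟩,
      Finset.mem_insert_self x α⟩
  · rintro ⟨β, x⟩ hp
    simp only [Finset.mem_sigma, Finset.mem_filter] at hp
    simp [Finset.insert_erase hp.2]
  · rintro ⟨α, x⟩ hp
    simp only [Finset.mem_sigma, Finset.mem_filter, WSC.linkVerts, Finset.mem_univ,
      true_and] at hp
    simp [Finset.erase_insert hp.2.1]
  · rintro ⟨β, x⟩ _; rfl


lemma mem_linkVerts {X : WSC V d} {α : Finset V} {x : V} :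
    x ∈ X.linkVerts α ↔ x ∉ α ∧ insert x α ∈ X.faces := by
  simp [WSC.linkVerts]

lemma linkPi_single (X : WSC V d) {α : Finset V} {x : V} (hx : x ∉ α) :
    X.linkPi α {x} = X.W (α.card + 1) (insert x α) / (((α.card : ℝ) + 1) * X.W α.card α) := by
  simp only [WSC.linkPi]
  have h1 : α ∪ {x} = insert x α := by ext a; simp [or_comm]
  rw [h1, Finset.card_insert_of_notMem hx, Nat.choose_succ_self_right]
  push_cast
  ring_nf

lemma linkPi_pair (X : WSC V d) {α : Finset V} {x y : V} (hx : x ∉ α) (hy : y ∉ α)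
    (hyx : y ≠ x) :
    X.linkPi α {x, y} = X.W (α.card + 2) (insert y (insert x α)) /
      ((((α.card : ℝ) + 2) * ((α.card : ℝ) + 1) / 2) * X.W α.card α) := by
  simp only [WSC.linkPi]
  have h1 : α ∪ {x, y} = insert y (insert x α) := by ext a; simp; tauto
  have h2 : (insert y (insert x α)).card = α.card + 2 := by
    rw [Finset.card_insert_of_notMem (by simp [hy, hyx]),
      Finset.card_insert_of_notMem hx]
  rw [h1, h2]
  have h3 := Nat.choose_symm (show α.card ≤ α.card + 2 by omega)
  rw [show α.card + 2 - α.card = 2 by omega] at h3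
  rw [← h3, Nat.cast_choose_two]
  push_cast
  ring_nf

end Aux


set_option maxHeartbeats 1000000 in
/-- **Garland decomposition.** Let `(X, Π)` be a weighted pure `d`-dimensional
simplicial complex, `0 ≤ j ≤ d-1`, and `f : ℝ^{X(j)}`.  For `α ∈ X(j-1)` (a face of
cardinality `j`) let `f_α(x) = f(α ∪ {x})`.  Then:
(1) `⟨f, f⟩_{Π_j} = E_{α ∼ Π_{j-1}} ⟨f_α, f_α⟩_{Π^α_0}`;
(2) `⟨f, P∨_j f⟩_{Π_j} = E_{α ∼ Π_{j-1}} ⟨f_α, J_α f_α⟩_{Π^α_0}`;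
(3) `⟨f, N_j f⟩_{Π_j} = E_{α ∼ Π_{j-1}} ⟨f_α, M_α f_α⟩_{Π^α_0}`. -/
theorem garland_identities {V : Type*} [DecidableEq V] [Fintype V] {d : ℕ}
    (X : WSC V d) (j : ℕ) (hj : j < d) (f : Finset V → ℝ) :
    X.inn (j + 1) f f =
      ∑ α ∈ X.faces.filter (fun α => α.card = j), X.W j α *
        X.linkInner α (fun x => f (insert x α)) (fun x => f (insert x α)) ∧
    X.inn (j + 1) f (X.downUp f) =
      ∑ α ∈ X.faces.filter (fun α => α.card = j), X.W j α *
        X.linkInner α (fun x => f (insert x α)) (X.linkJ α (fun x => f (insert x α))) ∧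
    X.inn (j + 1) f (X.nonLazy j f) =
      ∑ α ∈ X.faces.filter (fun α => α.card = j), X.W j α *
        X.linkInner α (fun x => f (insert x α))
          (X.linkWalk α (fun x => f (insert x α))) := by
  have hj1 : ((j:ℝ) + 1) ≠ 0 := by positivity
  have hj2 : ((j:ℝ) + 2) ≠ 0 := by positivity
  refine ⟨?_, ?_, ?_⟩
  · -- Part 1
    calc X.inn (j + 1) f f
        = ∑ β ∈ X.faces.filter (fun β => β.card = j + 1), ∑ x ∈ β,
            (1/((j:ℝ)+1)) * (X.W (j+1) (insert x (β.erase x)) * f (insert x (β.erase x))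
              * f (insert x (β.erase x))) := by
          simp only [WSC.inn]
          refine Finset.sum_congr rfl fun β hβ => ?_
          rw [Finset.mem_filter] at hβ
          trans (∑ _x ∈ β, (1/((j:ℝ)+1)) * (X.W (j+1) β * f β * f β))
          · rw [Finset.sum_const, hβ.2, nsmul_eq_mul]
            push_cast
            field_simp
          · exact Finset.sum_congr rfl fun x hx => by rw [Finset.insert_erase hx]
      _ = ∑ α ∈ X.faces.filter (fun α => α.card = j), ∑ x ∈ X.linkVerts α,
            (1/((j:ℝ)+1)) * (X.W (j+1) (insert x α) * f (insert x α) * f (insert x α)) :=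
          pair_sum X j (fun α x => (1/((j:ℝ)+1)) *
            (X.W (j+1) (insert x α) * f (insert x α) * f (insert x α)))
      _ = ∑ α ∈ X.faces.filter (fun α => α.card = j), X.W j α *
            X.linkInner α (fun x => f (insert x α)) (fun x => f (insert x α)) := by
          refine Finset.sum_congr rfl fun α hα => ?_
          rw [Finset.mem_filter] at hα
          obtain ⟨hαf, hαc⟩ := hα
          have hWα : X.W j α ≠ 0 := ne_of_gt (W_pos' X (by omega) hαf hαc)
          simp only [WSC.linkInner, Finset.mul_sum]
          refine Finset.sum_congr rfl fun x hx => ?_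
          obtain ⟨hxα, hxf⟩ := mem_linkVerts.1 hx
          have hpi := linkPi_single X hxα
          rw [hαc] at hpi
          rw [hpi]
          field_simp
  · -- Part 2
    calc X.inn (j + 1) f (X.downUp f)
        = ∑ β ∈ X.faces.filter (fun β => β.card = j + 1), ∑ x ∈ β,
            (1/((j:ℝ)+1)) * (X.W (j+1) (insert x (β.erase x)) * f (insert x (β.erase x))
              * X.downOp f (β.erase x)) := by
          simp only [WSC.inn, WSC.downUp, WSC.upOp]
          refine Finset.sum_congr rfl fun β hβ => ?_
          rw [Finset.mem_filter] at hβ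
          trans (∑ x ∈ β, (1/((j:ℝ)+1)) * (X.W (j+1) β * f β * X.downOp f (β.erase x)))
          · rw [hβ.2, Finset.mul_sum, Finset.mul_sum]
            refine Finset.sum_congr rfl fun x _ => ?_
            push_cast
            ring
          · exact Finset.sum_congr rfl fun x hx => by rw [Finset.insert_erase hx]
      _ = ∑ α ∈ X.faces.filter (fun α => α.card = j), ∑ x ∈ X.linkVerts α,
            (1/((j:ℝ)+1)) * (X.W (j+1) (insert x α) * f (insert x α) * X.downOp f α) :=
          pair_sum X j (fun α x => (1/((j:ℝ)+1)) *
            (X.W (j+1) (insert x α) * f (insert x α) * X.downOp f α))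
      _ = ∑ α ∈ X.faces.filter (fun α => α.card = j), X.W j α *
            X.linkInner α (fun x => f (insert x α)) (X.linkJ α (fun x => f (insert x α))) := by
          refine Finset.sum_congr rfl fun α hα => ?_
          rw [Finset.mem_filter] at hα
          obtain ⟨hαf, hαc⟩ := hα
          have hWα : X.W j α ≠ 0 := ne_of_gt (W_pos' X (by omega) hαf hαc)
          have hpi : ∀ x ∈ X.linkVerts α,
              X.linkPi α {x} = X.W (j+1) (insert x α) / (((j:ℝ)+1) * X.W j α) := by
            intro x hx
            have := linkPi_single X (mem_linkVerts.1 hx).1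
            rwa [hαc] at this
          have hD : X.downOp f α = (∑ x ∈ X.linkVerts α,
              X.W (j+1) (insert x α) * f (insert x α)) / (((j:ℝ)+1) * X.W j α) := by
            simp only [WSC.downOp, hαc]
            rw [sup_sum X hαf hαc, ← Finset.sum_div]
          have hT : ∑ y ∈ X.linkVerts α, X.linkPi α {y} * f (insert y α) =
              (∑ x ∈ X.linkVerts α, X.W (j+1) (insert x α) * f (insert x α)) /
                (((j:ℝ)+1) * X.W j α) := by
            rw [Finset.sum_div]
            refine Finset.sum_congr rfl fun y hy => ?_
            rw [hpi y hy]
            ring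
          simp only [WSC.linkInner, WSC.linkJ]
          rw [hT, hD, Finset.mul_sum]
          refine Finset.sum_congr rfl fun x hx => ?_
          rw [hpi x hx]
          field_simp
  · -- Part 3
    calc X.inn (j + 1) f (X.nonLazy j f)
        = ∑ β ∈ X.faces.filter (fun β => β.card = j + 1), ∑ x ∈ β,
            (1/(((j:ℝ)+1)*((j:ℝ)+2))) * ∑ y ∈ X.linkVerts (insert x (β.erase x)),
              X.W (j+2) (insert y (insert x (β.erase x))) *
                (f (insert x (β.erase x)) * f ((insert y (insert x (β.erase x))).erase x)) := by
          simp only [WSC.inn]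
          refine Finset.sum_congr rfl fun β hβ => ?_
          rw [Finset.mem_filter] at hβ
          obtain ⟨hβf, hβc⟩ := hβ
          have hWβ : (0:ℝ) < X.W (j+1) β := W_pos' X (by omega) hβf hβc
          have hWβ' : X.W (j+1) β ≠ 0 := ne_of_gt hWβ
          have h3 : ∑ y ∈ X.linkVerts β, X.W (j+2) (insert y β) =
              ((j:ℝ)+2) * X.W (j+1) β := by
            have hr := W_rec X (show j + 1 ≤ d by omega) β
            rw [sup_sum X hβf hβc] at hr
            rw [show j+1+1 = j+2 by omega] at hr
            rw [hr]
            push_cast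
            field_simp
          have h1 : X.upDown f β = ∑ y ∈ X.linkVerts β,
              (X.W (j+2) (insert y β) * ((1/((j:ℝ)+2)) *
                (f β + ∑ z ∈ β, f ((insert y β).erase z)))) / (((j:ℝ)+2) * X.W (j+1) β) := by
            simp only [WSC.upDown, WSC.downOp, hβc]
            rw [sup_sum X hβf hβc]
            refine Finset.sum_congr rfl fun y hy => ?_
            obtain ⟨hyβ, hyf⟩ := mem_linkVerts.1 hy
            simp only [WSC.upOp]
            rw [Finset.card_insert_of_notMem hyβ, hβc,
              Finset.sum_insert hyβ, Finset.erase_insert hyβ,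
              show j+1+1 = j+2 by omega]
            push_cast
            ring
          have e1 : X.W (j+1) β * f β * X.upDown f β =
              (1/((j:ℝ)+2)^2) * (((j:ℝ)+2) * X.W (j+1) β * (f β * f β) +
                ∑ y ∈ X.linkVerts β, X.W (j+2) (insert y β) *
                  (f β * ∑ z ∈ β, f ((insert y β).erase z))) := by
            rw [h1, Finset.mul_sum]
            trans ∑ y ∈ X.linkVerts β,
              ((1/((j:ℝ)+2)^2) * (X.W (j+2) (insert y β) * (f β * f β)) +
                (1/((j:ℝ)+2)^2) * (X.W (j+2) (insert y β) *
                  (f β * ∑ z ∈ β, f ((insert y β).erase z))))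
            · refine Finset.sum_congr rfl fun y _ => ?_
              field_simp
            · rw [Finset.sum_add_distrib, ← Finset.mul_sum, ← Finset.mul_sum,
                ← Finset.sum_mul, h3]
              ring
          have calc1 : ∀ S B : ℝ,
              X.W (j+1) β * f β * S =
                (1/((j:ℝ)+2)^2) * (((j:ℝ)+2) * X.W (j+1) β * (f β * f β) + B) →
              X.W (j+1) β * f β * ((((j:ℝ)+2)/((j:ℝ)+1)) * (S - 1/((j:ℝ)+2) * f β)) =
                (1/(((j:ℝ)+1)*((j:ℝ)+2))) * B := by
            intro S B hSB
            have expand : X.W (j+1) β * f β * ((((j:ℝ)+2)/((j:ℝ)+1)) * (S - 1/((j:ℝ)+2) * f β))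
                = (((j:ℝ)+2)/((j:ℝ)+1)) * (X.W (j+1) β * f β * S)
                  - (((j:ℝ)+2)/((j:ℝ)+1)) * (1/((j:ℝ)+2)) * (X.W (j+1) β * (f β * f β)) := by
              ring
            rw [expand, hSB]
            field_simp
            ring
          have key : X.W (j+1) β * f β * X.nonLazy j f β =
              (1/(((j:ℝ)+1)*((j:ℝ)+2))) * ∑ y ∈ X.linkVerts β,
                X.W (j+2) (insert y β) * (f β * ∑ z ∈ β, f ((insert y β).erase z)) := by
            simp only [WSC.nonLazy]
            exact calc1 (X.upDown f β) _ e1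
          trans ((1/(((j:ℝ)+1)*((j:ℝ)+2))) * ∑ x ∈ β, ∑ y ∈ X.linkVerts β,
            X.W (j+2) (insert y β) * (f β * f ((insert y β).erase x)))
          · rw [key]
            congr 1
            rw [Finset.sum_comm]
            refine Finset.sum_congr rfl fun y _ => ?_
            simp only [Finset.mul_sum]
          · rw [Finset.mul_sum]
            exact Finset.sum_congr rfl fun x hx => by rw [Finset.insert_erase hx]
      _ = ∑ α ∈ X.faces.filter (fun α => α.card = j), ∑ x ∈ X.linkVerts α,
            (1/(((j:ℝ)+1)*((j:ℝ)+2))) * ∑ y ∈ X.linkVerts (insert x α),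
              X.W (j+2) (insert y (insert x α)) *
                (f (insert x α) * f ((insert y (insert x α)).erase x)) :=
          pair_sum X j (fun α x => (1/(((j:ℝ)+1)*((j:ℝ)+2))) *
            ∑ y ∈ X.linkVerts (insert x α), X.W (j+2) (insert y (insert x α)) *
              (f (insert x α) * f ((insert y (insert x α)).erase x)))
      _ = ∑ α ∈ X.faces.filter (fun α => α.card = j), X.W j α *
            X.linkInner α (fun x => f (insert x α))
              (X.linkWalk α (fun x => f (insert x α))) := by
          refine Finset.sum_congr rfl fun α hα => ?_
          rw [Finset.mem_filter] at hα
          obtain ⟨hαf, hαc⟩ := hα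
          have hWα : (0:ℝ) < X.W j α := W_pos' X (by omega) hαf hαc
          have hWα' : X.W j α ≠ 0 := ne_of_gt hWα
          simp only [WSC.linkInner, WSC.linkWalk, Finset.mul_sum]
          refine Finset.sum_congr rfl fun x hx => ?_
          obtain ⟨hxα, hxf⟩ := mem_linkVerts.1 hx
          have hset : (X.linkVerts α).filter
              (fun y => y ≠ x ∧ insert y (insert x α) ∈ X.faces) =
              X.linkVerts (insert x α) := by
            ext y
            simp only [Finset.mem_filter, mem_linkVerts, Finset.mem_insert, not_or]
            constructor
            · rintro ⟨⟨hyα, _⟩, hyx, hins⟩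
              exact ⟨⟨hyx, hyα⟩, hins⟩
            · rintro ⟨⟨hyx, hyα⟩, hins⟩
              refine ⟨⟨hyα, X.down_closed _ hins _ ?_⟩, hyx, hins⟩
              exact Finset.insert_subset_insert y (Finset.subset_insert x α)
          rw [hset]
          refine Finset.sum_congr rfl fun y hy => ?_
          obtain ⟨hyins, hyf⟩ := mem_linkVerts.1 hy
          have hyx : y ≠ x := fun h => hyins (h ▸ Finset.mem_insert_self x α)
          have hyα : y ∉ α := fun h => hyins (Finset.mem_insert_of_mem h)
          have hxyα : x ∉ insert y α := by
            simp only [Finset.mem_insert, not_or]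
            exact ⟨fun h => hyx h.symm, hxα⟩
          have herase : (insert y (insert x α)).erase x = insert y α := by
            rw [Finset.insert_comm, Finset.erase_insert hxyα]
          rw [herase]
          have hpix := linkPi_single X hxα
          rw [hαc] at hpix
          have hpixy := linkPi_pair X hxα hyα hyx
          rw [hαc] at hpixy
          have hWx : (0:ℝ) < X.W (j+1) (insert x α) :=
            W_pos' X (by omega) hxf (by rw [Finset.card_insert_of_notMem hxα, hαc])
          have hWx' : X.W (j+1) (insert x α) ≠ 0 := ne_of_gt hWx
          rw [hpix, hpixy]
          field_simp
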